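/- For every n ≥ 1 there exists a 3-graph G on 2n vertices such that G contains no copy of K5^{(3)} and δ1(G) = C(2n−1, 2) − C(n−1, 2). Consequently c1(K5^{(3)}) ≥ 3/4. (Such a G is obtained by partitioning the vertex set into two n-sets V1, V2 and taking as edges all triples meeting both V1 and V2.) -/
import Mathlib


open Finset

/-- The degree of a vertex in a hypergraph: the number of edges containing it. -/
def hdeg {V : Type*} [DecidableEq V] (G : Finset (Finset V)) (x : V) : ℕ :=
  (G.filter (fun e => x ∈ e)).card

/-- The minimum vertex degree of a hypergraph. -/
noncomputable def minDeg {V : Type*} [DecidableEq V] (G : Finset (Finset V)) : ℕ :=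
  sInf (Set.range (hdeg G))

/-- Vertex `x` is covered by a copy of the complete 3-graph `K_t⁽³⁾` in `H`. -/
def CovK {V : Type*} [DecidableEq V] (t : ℕ) (H : Finset (Finset V)) (x : V) : Prop :=
  ∃ S : Finset V, x ∈ S ∧ S.card = t ∧ ∀ e ⊆ S, e.card = 3 → e ∈ H

/-- `c₁(n, K_t⁽³⁾)`: the maximum of `δ₁(G)` over `n`-vertex 3-graphs `G` having
no `K_t⁽³⁾`-covering. -/
noncomputable def c1K (t n : ℕ) : ℕ :=
  sSup {d : ℕ | ∃ H : Finset (Finset (Fin n)),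
    (∀ e ∈ H, e.card = 3) ∧ (∃ x, ¬ CovK t H x) ∧ d = minDeg H}

/-- `c₁(K_t⁽³⁾) = limsup_{n → ∞} c₁(n, K_t⁽³⁾)/C(n−1, 2)`. -/
noncomputable def c1Kdens (t : ℕ) : ℝ :=
  Filter.limsup (fun n : ℕ => (c1K t n : ℝ) / ((n - 1).choose 2 : ℝ)) Filter.atTop

/-! ### Auxiliary development -/

/-- The number of 3-subsets of `T` containing a fixed `x ∈ T` is `C(|T|-1, 2)`. -/
lemma count3 {α : Type*} [DecidableEq α] (T : Finset α) (x : α) (hx : x ∈ T) :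
    ((T.powersetCard 3).filter (fun e => x ∈ e)).card = (T.card - 1).choose 2 := by
  rw [← Finset.card_erase_of_mem hx, ← Finset.card_powersetCard 2 (T.erase x)]
  apply Finset.card_bij (fun e _ => Finset.erase e x)
  · intro e he
    simp only [mem_filter, Finset.mem_powersetCard] at he
    rw [Finset.mem_powersetCard]
    constructor
    · intro y hy
      exact Finset.mem_erase.mpr ⟨(Finset.mem_erase.mp hy).1, he.1.1 (Finset.mem_erase.mp hy).2⟩
    · rw [Finset.card_erase_of_mem he.2, he.1.2]
  · intro e1 h1 e2 h2 h
    simp only [mem_filter, Finset.mem_powersetCard] at h1 h2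
    have := congrArg (insert x) h
    rwa [Finset.insert_erase h1.2, Finset.insert_erase h2.2] at this
  · intro f hf
    rw [Finset.mem_powersetCard] at hf
    have hxf : x ∉ f := fun h => (Finset.mem_erase.mp (hf.1 h)).1 rfl
    refine ⟨insert x f, ?_, ?_⟩
    · simp only [mem_filter, Finset.mem_powersetCard]
      refine ⟨⟨?_, ?_⟩, Finset.mem_insert_self _ _⟩
      · intro y hy
        rcases Finset.mem_insert.mp hy with rfl | hy
        · exact hx
        · exact Finset.mem_of_mem_erase (hf.1 hy)
      · rw [Finset.card_insert_of_notMem hxf, hf.2]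
    · rw [Finset.erase_insert hxf]

lemma card_L {n : ℕ} (hn : 1 ≤ n) :
    (univ.filter (fun x : Fin (2*n) => (x:ℕ) < n)).card = n := by
  have h : univ.filter (fun x : Fin (2*n) => (x:ℕ) < n)
      = Finset.Iio (⟨n, by omega⟩ : Fin (2*n)) := by
    ext x; simp [Fin.lt_def]
  rw [h, Fin.card_Iio]

lemma card_R {n : ℕ} (hn : 1 ≤ n) :
    (univ.filter (fun x : Fin (2*n) => ¬ (x:ℕ) < n)).card = n := by
  have := Finset.card_filter_add_card_filter_not
    (s := (univ : Finset (Fin (2*n)))) (p := fun x : Fin (2*n) => (x:ℕ) < n)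
  rw [card_L hn, Finset.card_univ, Fintype.card_fin] at this
  omega

/-- A triple crosses the bipartition `{x < n} ∪ {x ≥ n}`. -/
def cond' (n : ℕ) (e : Finset (Fin (2*n))) : Prop :=
  (∃ x ∈ e, (x:ℕ) < n) ∧ (∃ x ∈ e, ¬ (x:ℕ) < n)

instance (n : ℕ) : DecidablePred (cond' n) := fun e => by
  unfold cond'; infer_instance

/-- The extremal example: all triples meeting both halves. -/
def myG (n : ℕ) : Finset (Finset (Fin (2*n))) :=
  ((univ : Finset (Fin (2*n))).powersetCard 3).filter (cond' n)

lemma myG_card (n : ℕ) : ∀ e ∈ myG n, e.card = 3 := by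
  intro e he
  have := (Finset.mem_filter.mp he).1
  exact (Finset.mem_powersetCard.mp this).2

lemma myG_noK5 (n : ℕ) (S : Finset (Fin (2*n))) (hS : S.card = 5) :
    ¬ ∀ e ⊆ S, e.card = 3 → e ∈ myG n := by
  intro h
  classical
  have hsum := Finset.card_filter_add_card_filter_not
    (s := S) (p := fun x : Fin (2*n) => (x:ℕ) < n)
  rw [hS] at hsum
  by_cases h3 : 3 ≤ (S.filter (fun x : Fin (2*n) => (x:ℕ) < n)).card
  · obtain ⟨e, heS, hec⟩ := Finset.exists_subset_card_eq h3
    have hmem := h e (heS.trans (Finset.filter_subset _ _)) hec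
    obtain ⟨-, y, hy, hyn⟩ := (Finset.mem_filter.mp hmem).2
    exact hyn (Finset.mem_filter.mp (heS hy)).2
  · have h3' : 3 ≤ (S.filter (fun x : Fin (2*n) => ¬ (x:ℕ) < n)).card := by omega
    obtain ⟨e, heS, hec⟩ := Finset.exists_subset_card_eq h3'
    have hmem := h e (heS.trans (Finset.filter_subset _ _)) hec
    obtain ⟨⟨y, hy, hyn⟩, -⟩ := (Finset.mem_filter.mp hmem).2
    exact (Finset.mem_filter.mp (heS hy)).2 hyn

lemma myG_deg {n : ℕ} (hn : 1 ≤ n) (x : Fin (2*n)) :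
    hdeg (myG n) x = (2*n-1).choose 2 - (n-1).choose 2 := by
  classical
  set P := ((univ : Finset (Fin (2*n))).powersetCard 3) with hP
  set side : Finset (Fin (2*n)) :=
    if (x:ℕ) < n then univ.filter (fun y : Fin (2*n) => (y:ℕ) < n)
    else univ.filter (fun y : Fin (2*n) => ¬ (y:ℕ) < n) with hside
  have hxside : x ∈ side := by
    by_cases hx : (x:ℕ) < n <;> simp [hside, hx] <;> omega
  have hsidecard : side.card = n := by
    by_cases hx : (x:ℕ) < n <;> simp only [hside, hx, if_true, if_false] <;>
      [exact card_L hn; exact card_R hn]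
  set s := P.filter (fun e => x ∈ e) with hs
  have hscard : s.card = (2*n-1).choose 2 := by
    rw [hs, count3 univ x (mem_univ x), card_univ, Fintype.card_fin]
  have hGx : (myG n).filter (fun e => x ∈ e) = s.filter (cond' n) := by
    rw [hs, myG, Finset.filter_filter, Finset.filter_filter]
    apply Finset.filter_congr
    intro e _
    constructor <;> (rintro ⟨h1, h2⟩; exact ⟨h2, h1⟩)
  have hcomp : s.filter (fun e => ¬ cond' n e)
      = (side.powersetCard 3).filter (fun e => x ∈ e) := by
    ext e
    simp only [hs, hP, Finset.mem_filter, Finset.mem_powersetCard, Finset.subset_univ,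
      true_and, cond']
    constructor
    · rintro ⟨⟨hc, hxe⟩, hno⟩
      push_neg at hno
      by_cases hx : (x:ℕ) < n
      · have hall : ∀ y ∈ e, (y:ℕ) < n := by
          intro y hy
          by_contra hy'
          exact hy' (hno ⟨x, hxe, hx⟩ y hy)
        simp only [hside, hx, if_true]
        exact ⟨⟨fun y hy => Finset.mem_filter.mpr ⟨Finset.mem_univ _, hall y hy⟩, hc⟩, hxe⟩
      · have hall : ∀ y ∈ e, ¬ (y:ℕ) < n := by
          intro y hy hylt
          exact hx (hno ⟨y, hy, hylt⟩ x hxe)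
        simp only [hside, hx, if_false]
        exact ⟨⟨fun y hy => Finset.mem_filter.mpr ⟨Finset.mem_univ _, hall y hy⟩, hc⟩, hxe⟩
    · rintro ⟨⟨hsub, hc⟩, hxe⟩
      by_cases hx : (x:ℕ) < n
      · simp only [hside, hx, if_true] at hsub
        refine ⟨⟨hc, hxe⟩, ?_⟩
        rintro ⟨-, y, hy, hyn⟩
        exact hyn (Finset.mem_filter.mp (hsub hy)).2
      · simp only [hside, hx, if_false] at hsub
        refine ⟨⟨hc, hxe⟩, ?_⟩
        rintro ⟨⟨y, hy, hyn⟩, -⟩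
        exact (Finset.mem_filter.mp (hsub hy)).2 hyn
  have hcompcard : (s.filter (fun e => ¬ cond' n e)).card = (n-1).choose 2 := by
    rw [hcomp, count3 side x hxside, hsidecard]
  have hsum := Finset.card_filter_add_card_filter_not (s := s) (p := cond' n)
  show ((myG n).filter (fun e => x ∈ e)).card = _
  rw [hGx]
  omega

lemma myG_minDeg {n : ℕ} (hn : 1 ≤ n) :
    minDeg (myG n) = (2*n-1).choose 2 - (n-1).choose 2 := by
  haveI : Nonempty (Fin (2*n)) := ⟨⟨0, by omega⟩⟩
  have hr : Set.range (hdeg (myG n)) = {(2*n-1).choose 2 - (n-1).choose 2} := by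
    ext d
    simp [myG_deg hn, eq_comm]
  rw [minDeg, hr, csInf_singleton]

lemma c1set_le {t n : ℕ} (hn : 1 ≤ n) {d : ℕ}
    (hd : d ∈ {d : ℕ | ∃ H : Finset (Finset (Fin n)),
      (∀ e ∈ H, e.card = 3) ∧ (∃ x, ¬ CovK t H x) ∧ d = minDeg H}) :
    d ≤ (n-1).choose 2 := by
  obtain ⟨H, h3, -, rfl⟩ := hd
  have x0 : Fin n := ⟨0, by omega⟩
  have h1 : minDeg H ≤ hdeg H x0 := Nat.sInf_le (Set.mem_range_self x0)
  refine h1.trans ?_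
  have : H.filter (fun e => x0 ∈ e)
      ⊆ ((univ : Finset (Fin n)).powersetCard 3).filter (fun e => x0 ∈ e) := by
    intro e he
    rw [Finset.mem_filter] at he ⊢
    exact ⟨Finset.mem_powersetCard.mpr ⟨Finset.subset_univ _, h3 e he.1⟩, he.2⟩
  calc hdeg H x0 ≤ _ := Finset.card_le_card this
    _ = (n-1).choose 2 := by
        rw [count3 univ x0 (mem_univ x0), card_univ, Fintype.card_fin]

lemma c1K_le {t n : ℕ} : c1K t n ≤ (n-1).choose 2 := by
  rcases Nat.eq_zero_or_pos n with rfl | hn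
  · have : {d : ℕ | ∃ H : Finset (Finset (Fin 0)),
        (∀ e ∈ H, e.card = 3) ∧ (∃ x, ¬ CovK t H x) ∧ d = minDeg H} = ∅ := by
      ext d
      simp only [Set.mem_setOf_eq, Set.mem_empty_iff_false, iff_false]
      rintro ⟨H, -, ⟨x, -⟩, -⟩
      exact x.elim0
    rw [c1K, this, csSup_empty]
    exact Nat.zero_le _
  · rcases Set.eq_empty_or_nonempty {d : ℕ | ∃ H : Finset (Finset (Fin n)),
        (∀ e ∈ H, e.card = 3) ∧ (∃ x, ¬ CovK t H x) ∧ d = minDeg H} with he | hne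
    · rw [c1K, he, csSup_empty]; exact Nat.zero_le _
    · exact csSup_le hne (fun d hd => c1set_le hn hd)

lemma c1K_ge (n : ℕ) (hn : 1 ≤ n) :
    (2*n-1).choose 2 - (n-1).choose 2 ≤ c1K 5 (2*n) := by
  apply le_csSup
  · exact ⟨(2*n-1).choose 2, fun d hd => c1set_le (by omega) hd⟩
  · refine ⟨myG n, myG_card n, ⟨⟨0, by omega⟩, ?_⟩, (myG_minDeg hn).symm⟩
    rintro ⟨S, -, hS5, hall⟩
    exact myG_noK5 n S hS5 hall

lemma choose_ineq {m : ℕ} (hm : 2 ≤ m) : 4 * (m-1).choose 2 ≤ (2*m-1).choose 2 := by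
  obtain ⟨a, rfl⟩ : ∃ a, m = a + 2 := ⟨m - 2, by omega⟩
  rw [Nat.choose_two_right, Nat.choose_two_right]
  have h1 : (a+2-1) * (a+2-1-1) = (a+1) * a := rfl
  have h2' : 2*(a+2)-1 = 2*a+3 := by omega
  have h2 : (2*(a+2)-1) * (2*(a+2)-1-1) = 4*((a+1)*a) + 6*a + 6 := by
    rw [h2']; show (2*a+3) * (2*a+2) = _; ring
  have h3 : 2 ∣ (a+1) * a := by
    rw [mul_comm]; exact (Nat.even_mul_succ_self a).two_dvd
  rw [h1, h2]
  omega

theorem stmt13 :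
    (∀ n : ℕ, 1 ≤ n →
      ∃ G : Finset (Finset (Fin (2 * n))),
        (∀ e ∈ G, e.card = 3) ∧
        (¬ ∃ S : Finset (Fin (2 * n)), S.card = 5 ∧ ∀ e ⊆ S, e.card = 3 → e ∈ G) ∧
        minDeg G = (2 * n - 1).choose 2 - (n - 1).choose 2) ∧
    (3 / 4 : ℝ) ≤ c1Kdens 5 := by
  constructor
  · intro n hn
    refine ⟨myG n, myG_card n, ?_, myG_minDeg hn⟩
    rintro ⟨S, hS5, hall⟩
    exact myG_noK5 n S hS5 hall
  · unfold c1Kdens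
    apply Filter.le_limsup_of_frequently_le
    · rw [Filter.frequently_atTop]
      intro N
      set m := max N 2 with hm
      have hm2 : 2 ≤ m := le_max_right _ _
      refine ⟨2 * m, by omega, ?_⟩
      have hpos : 0 < (2*m-1).choose 2 := Nat.choose_pos (by omega)
      have hden : (0:ℝ) < ((2*m-1).choose 2 : ℝ) := by exact_mod_cast hpos
      rw [le_div_iff₀ hden]
      have h1 := c1K_ge m (by omega)
      have h2 := choose_ineq hm2
      have h3 : 3 * (2*m-1).choose 2 ≤ 4 * c1K 5 (2*m) := by omega
      have h3' : (3:ℝ) * ((2*m-1).choose 2 : ℝ) ≤ 4 * (c1K 5 (2*m) : ℝ) := by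
        exact_mod_cast h3
      linarith
    · refine Filter.isBoundedUnder_of ⟨1, fun n => ?_⟩
      rcases Nat.eq_zero_or_pos ((n-1).choose 2) with h0 | hpos
      · simp [h0]
      · have hd : (0:ℝ) < ((n-1).choose 2 : ℝ) := by exact_mod_cast hpos
        rw [div_le_one hd]
        exact_mod_cast c1K_le
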